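/- If X is L-compositional and f : Σ → Σ is an L-isomorphism (a bijective L-homomorphism whose inverse is also a function Σ → Σ), then the elementwise extension of f is a symmetry of X: the image of X under f equals X. -/

import Mathlib

/-- A lexical algebra: an indexed family of finitary Boolean relations on an alphabet. -/
structure LexAlg (α : Type) where
  ι : Type
  arity : ι → ℕ
  rel : (i : ι) → (Fin (arity i) → α) → Bool

/-- `f` is an `L`-homomorphism: it preserves every relation of `L` exactly. -/
def LexAlg.IsHom {α : Type} (L : LexAlg α) (f : α → α) : Prop :=
  ∀ i (a : Fin (L.arity i) → α), L.rel i a = L.rel i (f ∘ a)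

/-- Lexical representation of a sequence: the tuple of relational tensors. -/
def LexAlg.rep {α : Type} (L : LexAlg α) (x : List α) :
    (i : L.ι) → (Fin (L.arity i) → Fin x.length) → Bool :=
  fun i idx => L.rel i (fun k => x.get (idx k))

/-- `X` is `L`-compositional: membership is a function of the lexical representation. -/
def LexAlg.Compositional {α : Type} (L : LexAlg α) (X : Set (List α)) : Prop :=
  ∃ C : (Σ m : ℕ, (i : L.ι) → (Fin (L.arity i) → Fin m) → Bool) → Bool,
    ∀ x : List α, x ∈ X ↔ C ⟨x.length, L.rep x⟩ = true

private lemma sigma_rep_eq {α : Type} (L : LexAlg α) {m n : ℕ} (h : m = n)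
    (F : (i : L.ι) → (Fin (L.arity i) → Fin m) → Bool)
    (G : (i : L.ι) → (Fin (L.arity i) → Fin n) → Bool)
    (hFG : ∀ i idx, F i idx = G i (fun k => Fin.cast h (idx k))) :
    (⟨m, F⟩ : Σ m : ℕ, (i : L.ι) → (Fin (L.arity i) → Fin m) → Bool) = ⟨n, G⟩ := by
  subst h
  exact congrArg (Sigma.mk m) (funext fun i => funext fun idx => hFG i idx)

theorem liso_is_symmetry {α : Type} [Finite α] (L : LexAlg α)
    (X : Set (List α)) (hX : L.Compositional X) (f : α → α)
    (hf : L.IsHom f) (hbij : Function.Bijective f) :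
    (fun x : List α => x.map f) '' X = X := by
  obtain ⟨C, hC⟩ := hX
  have key : ∀ x : List α, (x.map f ∈ X ↔ x ∈ X) := by
    intro x
    rw [hC, hC]
    have hlen : (x.map f).length = x.length := List.length_map f
    have : (⟨(x.map f).length, L.rep (x.map f)⟩ :
        Σ m : ℕ, (i : L.ι) → (Fin (L.arity i) → Fin m) → Bool) = ⟨x.length, L.rep x⟩ := by
      refine sigma_rep_eq L hlen _ _ ?_
      intro i idx
      have h1 : (fun k => (x.map f).get (idx k)) =
          f ∘ (fun k => x.get (Fin.cast hlen (idx k))) := by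
        funext k
        simp [List.get_eq_getElem]
      simp only [LexAlg.rep, h1]
      exact (hf i _).symm
    rw [this]
  have hg := Function.rightInverse_surjInv hbij.surjective
  ext y
  constructor
  · rintro ⟨x, hx, rfl⟩
    exact (key x).mpr hx
  · intro hy
    refine ⟨y.map (Function.surjInv hbij.surjective), ?_, ?_⟩
    · apply (key _).mp
      have : (y.map (Function.surjInv hbij.surjective)).map f = y := by
        rw [List.map_map]
        simpa using List.map_congr_left (fun a _ => hg a) |>.trans (List.map_id y)
      rw [this]; exact hy
    · simp only
      rw [List.map_map]
      exact (List.map_congr_left (fun a _ => hg a)).trans (List.map_id y)
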